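/- arXiv:2307.09149 — 4 statements merged into one kernel-verified Lean document; each statement's English description precedes it below -/
import Mathlib

section
/- Let H be an N×N Hermitian complex matrix, D an N×N Hermitian positive semidefinite complex matrix, γ > 0 and L ∈ ℝ such that L·I − H is positive semidefinite. Set W = γH + D, fix b ∈ ℂ^N, and define φ(μ) = μᴴWμ − 2·Re(μᴴb). Then for all μ, μ₀ ∈ ℂ^N, φ(μ) ≤ φ(μ₀) + 2·Re{(μ−μ₀)ᴴ(Wμ₀ − b)} + γL‖μ−μ₀‖² + (μ−μ₀)ᴴD(μ−μ₀), with equality when μ = μ₀. -/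
open Matrix
open scoped ComplexOrder

private lemma herm_dot_comm {N : ℕ} {W : Matrix (Fin N) (Fin N) ℂ}
    (hW : W.IsHermitian) (x y : Fin N → ℂ) :
    (star x ⬝ᵥ W *ᵥ y).re = (star y ⬝ᵥ W *ᵥ x).re := by
  have h : star x ⬝ᵥ W *ᵥ y = star (star y ⬝ᵥ W *ᵥ x) := by
    conv_rhs => rw [star_dotProduct, star_star, star_mulVec, hW.eq, ← dotProduct_mulVec]
  rw [h, Complex.star_def, Complex.conj_re]

private lemma psd_re_nonneg {N : ℕ} {M : Matrix (Fin N) (Fin N) ℂ}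
    (hM : M.PosSemidef) (x : Fin N → ℂ) : 0 ≤ (star x ⬝ᵥ M *ᵥ x).re :=
  hM.re_dotProduct_nonneg x

/-- **MM surrogate majorization.** With `H` Hermitian, `D` Hermitian PSD, `γ > 0`,
`L·I − H ⪰ 0` and `W = γH + D`, the quadratic `φ(μ) = μᴴWμ − 2·Re(μᴴb)` satisfies
`φ(μ) ≤ φ(μ₀) + 2·Re{(μ−μ₀)ᴴ(Wμ₀ − b)} + γL‖μ−μ₀‖² + (μ−μ₀)ᴴD(μ−μ₀)`,
with equality when `μ = μ₀`. -/
theorem stmt2 {N : ℕ} (H D : Matrix (Fin N) (Fin N) ℂ) (hH : H.IsHermitian)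
    (hD : D.PosSemidef) (γ L : ℝ) (hγ : 0 < γ)
    (hL : ((L : ℂ) • (1 : Matrix (Fin N) (Fin N) ℂ) - H).PosSemidef)
    (b : Fin N → ℂ) :
    ∀ φ : (Fin N → ℂ) → ℝ,
      (∀ μ, φ μ = (star μ ⬝ᵥ (((γ : ℂ) • H + D) *ᵥ μ)).re - 2 * (star μ ⬝ᵥ b).re) →
      ∀ μ μ₀ : Fin N → ℂ,
        (φ μ ≤ φ μ₀ + 2 * (star (μ - μ₀) ⬝ᵥ (((γ : ℂ) • H + D) *ᵥ μ₀ - b)).re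
            + γ * L * (∑ i, ‖μ i - μ₀ i‖ ^ 2)
            + (star (μ - μ₀) ⬝ᵥ (D *ᵥ (μ - μ₀))).re) ∧
        (μ = μ₀ →
          φ μ = φ μ₀ + 2 * (star (μ - μ₀) ⬝ᵥ (((γ : ℂ) • H + D) *ᵥ μ₀ - b)).re
            + γ * L * (∑ i, ‖μ i - μ₀ i‖ ^ 2)
            + (star (μ - μ₀) ⬝ᵥ (D *ᵥ (μ - μ₀))).re) := by
  intro φ hφ μ μ₀
  set W : Matrix (Fin N) (Fin N) ℂ := (γ : ℂ) • H + D with hWdef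
  have hWH : W.IsHermitian := by
    refine IsHermitian.add ?_ hD.1
    simp [Matrix.IsHermitian, conjTranspose_smul, hH.eq]
  set d : Fin N → ℂ := μ - μ₀ with hd
  -- norm sum equals re of dot product
  have hnorm : (∑ i, ‖μ i - μ₀ i‖ ^ 2) = (star d ⬝ᵥ d).re := by
    simp only [dotProduct, Pi.star_apply, hd, Pi.sub_apply]
    rw [Complex.re_sum]
    congr 1; funext i
    simp [Complex.sq_norm, Complex.normSq_apply, Complex.mul_re]
    ring
  -- key expansion
  have hμ : μ = μ₀ + d := by simp [hd]
  have hexp : (star μ ⬝ᵥ W *ᵥ μ).re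
      = (star μ₀ ⬝ᵥ W *ᵥ μ₀).re + 2 * (star d ⬝ᵥ W *ᵥ μ₀).re + (star d ⬝ᵥ W *ᵥ d).re := by
    have hsym := herm_dot_comm hWH μ₀ d
    rw [hμ]
    simp only [star_add, add_dotProduct, mulVec_add, dotProduct_add, Complex.add_re]
    rw [hsym]; ring
  have hb : (star μ ⬝ᵥ b).re = (star μ₀ ⬝ᵥ b).re + (star d ⬝ᵥ b).re := by
    rw [hμ]; simp only [star_add, add_dotProduct, Complex.add_re]
  -- quadratic form splits
  have hsplit : (star d ⬝ᵥ W *ᵥ d).re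
      = γ * (star d ⬝ᵥ H *ᵥ d).re + (star d ⬝ᵥ D *ᵥ d).re := by
    simp only [hWdef, add_mulVec, dotProduct_add, smul_mulVec, dotProduct_smul,
      Complex.add_re, Complex.smul_re]
    norm_num [Complex.ofReal_re]
  -- bound on H quadratic form
  have hHbound : (star d ⬝ᵥ H *ᵥ d).re ≤ L * (star d ⬝ᵥ d).re := by
    have h0 := psd_re_nonneg hL d
    have : (star d ⬝ᵥ ((L : ℂ) • (1 : Matrix (Fin N) (Fin N) ℂ) - H) *ᵥ d).re
        = L * (star d ⬝ᵥ d).re - (star d ⬝ᵥ H *ᵥ d).re := by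
      simp only [sub_mulVec, dotProduct_sub, Complex.sub_re, smul_mulVec,
        one_mulVec, dotProduct_smul, Complex.smul_re]
      norm_num
    linarith [this ▸ h0]
  -- linear term
  have hlin : (star d ⬝ᵥ (W *ᵥ μ₀ - b)).re
      = (star d ⬝ᵥ W *ᵥ μ₀).re - (star d ⬝ᵥ b).re := by
    simp only [dotProduct_sub, Complex.sub_re]
  constructor
  · rw [hφ μ, hφ μ₀, hexp, hb, hlin, hnorm, hsplit]
    nlinarith [hγ.le, hHbound]
  · intro h
    have hd0 : d = 0 := by simp [hd, h]
    rw [hφ μ, hφ μ₀, hexp, hb, hnorm, hd0]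
    simp
end

section
/- Let W be an N×N Hermitian positive definite complex matrix, M an N×N Hermitian complex matrix such that M − W is positive semidefinite, and b ∈ ℂ^N. Then M is invertible, and for every initial point μ₀ ∈ ℂ^N the sequence defined by μ_{t+1} = μ_t − M⁻¹(Wμ_t − b) converges to W⁻¹b, the unique global minimizer of φ(μ) = μᴴWμ − 2·Re(μᴴb). -/
open Matrix Filter
open scoped ComplexOrder Topology

/-- **Convergence of the inverse-free MM iteration.** If `W` is Hermitian positive
definite, `M` is Hermitian with `M − W ⪰ 0`, then `M` is invertible and the iteration
`μ_{t+1} = μ_t − M⁻¹(Wμ_t − b)` converges (for any start) to `W⁻¹b`, the unique global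
minimizer of `φ(μ) = μᴴWμ − 2·Re(μᴴb)`. -/
theorem stmt4 {N : ℕ} (W M : Matrix (Fin N) (Fin N) ℂ) (hW : W.PosDef)
    (hM : M.IsHermitian) (hMW : (M - W).PosSemidef) (b : Fin N → ℂ) :
    IsUnit M ∧
    (∀ μ : ℕ → Fin N → ℂ,
      (∀ t, μ (t + 1) = μ t - M⁻¹ *ᵥ (W *ᵥ μ t - b)) →
      Tendsto μ atTop (𝓝 (W⁻¹ *ᵥ b))) ∧
    (∀ φ : (Fin N → ℂ) → ℝ,
      (∀ μ, φ μ = (star μ ⬝ᵥ (W *ᵥ μ)).re - 2 * (star μ ⬝ᵥ b).re) →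
      (∀ μ, φ (W⁻¹ *ᵥ b) ≤ φ μ) ∧
      (∀ μ, φ μ = φ (W⁻¹ *ᵥ b) → μ = W⁻¹ *ᵥ b)) := by
  have hMpd : M.PosDef := by
    have h := hW.add_posSemidef hMW
    simpa using h
  have hMunit : IsUnit M := hMpd.isUnit
  have hWunit : IsUnit W := hW.isUnit
  have hMdet : IsUnit M.det := (Matrix.isUnit_iff_isUnit_det M).mp hMunit
  have hWdet : IsUnit W.det := (Matrix.isUnit_iff_isUnit_det W).mp hWunit
  have hMM : M * M⁻¹ = 1 := Matrix.mul_nonsing_inv M hMdet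
  have hMM' : M⁻¹ * M = 1 := Matrix.nonsing_inv_mul M hMdet
  have hWW : W * W⁻¹ = 1 := Matrix.mul_nonsing_inv W hWdet
  have hWW' : W⁻¹ * W = 1 := Matrix.nonsing_inv_mul W hWdet
  have hMinvH : M⁻¹.IsHermitian := hM.inv
  have hWμs : W *ᵥ (W⁻¹ *ᵥ b) = b := by
    rw [Matrix.mulVec_mulVec, hWW, Matrix.one_mulVec]
  -- real parts of quadratic forms of (semi)definite matrices
  have hrePSD : ∀ {A : Matrix (Fin N) (Fin N) ℂ}, A.PosSemidef →
      ∀ x : Fin N → ℂ, 0 ≤ (star x ⬝ᵥ (A *ᵥ x)).re := by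
    intro A hA x
    have h0 := hA.dotProduct_mulVec_nonneg x
    rw [Complex.le_def] at h0
    simpa using h0.1
  have hrePD : ∀ {A : Matrix (Fin N) (Fin N) ℂ}, A.PosDef →
      ∀ x : Fin N → ℂ, x ≠ 0 → 0 < (star x ⬝ᵥ (A *ᵥ x)).re := by
    intro A hA x hx
    have h0 := hA.dotProduct_mulVec_pos hx
    rw [Complex.lt_def] at h0
    simpa using h0.1
  -- adjoint move lemma
  have move : ∀ (A B : Matrix (Fin N) (Fin N) ℂ) (x : Fin N → ℂ),
      star (B *ᵥ x) ⬝ᵥ (A *ᵥ (B *ᵥ x)) = star x ⬝ᵥ ((Bᴴ * A * B) *ᵥ x) := by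
    intro A B x
    simp only [star_mulVec, dotProduct_mulVec, vecMul_vecMul]
  -- continuity of the quadratic forms
  have hcont : ∀ A : Matrix (Fin N) (Fin N) ℂ,
      Continuous fun v : Fin N → ℂ => (star v ⬝ᵥ (A *ᵥ v)).re := by
    intro A
    apply Complex.continuous_re.comp
    have : (fun v : Fin N → ℂ => star v ⬝ᵥ (A *ᵥ v))
        = fun v => ∑ i, star (v i) * ∑ j, A i j * v j := by
      funext v
      simp [dotProduct, Matrix.mulVec, Complex.star_def]
    rw [this]
    fun_prop
  -- real scaling of the quadratic forms
  have hscale : ∀ (A : Matrix (Fin N) (Fin N) ℂ) (a : ℝ) (v : Fin N → ℂ),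
      (star (a • v) ⬝ᵥ (A *ᵥ (a • v))).re = a ^ 2 * (star v ⬝ᵥ (A *ᵥ v)).re := by
    intro A a v
    rw [star_smul, star_trivial, Matrix.mulVec_smul, smul_dotProduct,
      dotProduct_smul, Complex.smul_re, Complex.smul_re]
    simp only [smul_eq_mul]
    ring
  -- fW ≤ fM pointwise
  have hfWM : ∀ v : Fin N → ℂ,
      (star v ⬝ᵥ (W *ᵥ v)).re ≤ (star v ⬝ᵥ (M *ᵥ v)).re := by
    intro v
    have h0 := hrePSD hMW v
    rw [Matrix.sub_mulVec, dotProduct_sub, Complex.sub_re] at h0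
    linarith
  -- the key PSD matrix
  have hMc1 : ∀ X : Matrix (Fin N) (Fin N) ℂ, M * (M⁻¹ * X) = X := by
    intro X; rw [← mul_assoc, hMM, one_mul]
  have hMc2 : ∀ X : Matrix (Fin N) (Fin N) ℂ, M⁻¹ * (M * X) = X := by
    intro X; rw [← mul_assoc, hMM', one_mul]
  have hWc1 : ∀ X : Matrix (Fin N) (Fin N) ℂ, W * (W⁻¹ * X) = X := by
    intro X; rw [← mul_assoc, hWW, one_mul]
  have hWc2 : ∀ X : Matrix (Fin N) (Fin N) ℂ, W⁻¹ * (W * X) = X := by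
    intro X; rw [← mul_assoc, hWW', one_mul]
  have hXpsd : ((M - W) + (M - W) * W⁻¹ * (M - W)).PosSemidef := by
    have h2 : ((M - W) * W⁻¹ * (M - W)).PosSemidef := by
      have := (hW.inv.posSemidef).conjTranspose_mul_mul_same (M - W)
      rwa [hMW.isHermitian.eq] at this
    exact hMW.add h2
  have hid : (M⁻¹ * W)ᴴ * ((M - W) + (M - W) * W⁻¹ * (M - W)) * (M⁻¹ * W)
      = W - W * M⁻¹ * W := by
    rw [Matrix.conjTranspose_mul, hW.isHermitian.eq, hMinvH.eq]
    simp only [mul_sub, sub_mul, mul_add, add_mul, mul_assoc, hMM, hMM', hWW, hWW',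
      hMc1, hMc2, hWc1, hWc2, mul_one, one_mul]
    abel
  have hKpsd : (W - W * M⁻¹ * W).PosSemidef :=
    hid ▸ hXpsd.conjTranspose_mul_mul_same (M⁻¹ * W)
  have hSid : (1 - M⁻¹ * W)ᴴ * M * (1 - M⁻¹ * W)
      = (M - W) - (W - W * M⁻¹ * W) := by
    rw [Matrix.conjTranspose_sub, Matrix.conjTranspose_one, Matrix.conjTranspose_mul,
      hW.isHermitian.eq, hMinvH.eq]
    simp only [mul_sub, sub_mul, mul_add, add_mul, mul_assoc, hMM, hMM', hWW, hWW',
      hMc1, hMc2, hWc1, hWc2, mul_one, one_mul]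
    try abel
  refine ⟨hMunit, ?_, ?_⟩
  · -- convergence of the iteration
    intro μ hrec
    rcases Nat.eq_zero_or_pos N with hN | hN
    · subst hN
      have hall : ∀ x y : Fin 0 → ℂ, x = y := fun x y => funext fun i => i.elim0
      have : μ = fun _ => W⁻¹ *ᵥ b := funext fun t => hall _ _
      rw [this]
      exact tendsto_const_nhds
    · -- constants from compactness
      have hne : (Metric.sphere (0 : Fin N → ℂ) 1).Nonempty := by
        refine ⟨fun _ => (1 : ℂ), ?_⟩
        rw [mem_sphere_zero_iff_norm]
        have : Nonempty (Fin N) := ⟨⟨0, hN⟩⟩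
        simpa using (Pi.norm_const (ι := Fin N) (1 : ℂ))
      obtain ⟨vmin, hvmin_mem, hvmin⟩ :=
        (isCompact_sphere (0 : Fin N → ℂ) 1).exists_isMinOn hne ((hcont W).continuousOn)
      obtain ⟨vmax, hvmax_mem, hvmax⟩ :=
        (isCompact_sphere (0 : Fin N → ℂ) 1).exists_isMaxOn hne ((hcont M).continuousOn)
      set c : ℝ := (star vmin ⬝ᵥ (W *ᵥ vmin)).re with hc_def
      set C : ℝ := (star vmax ⬝ᵥ (M *ᵥ vmax)).re with hC_def
      have hvmin_ne : vmin ≠ 0 := by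
        rw [mem_sphere_zero_iff_norm] at hvmin_mem
        intro h; rw [h] at hvmin_mem; simp at hvmin_mem
      have hc : 0 < c := hrePD hW vmin hvmin_ne
      have hcC : c ≤ C := le_trans (hvmin hvmax_mem) (hfWM vmax)
      have hC : 0 < C := lt_of_lt_of_le hc hcC
      -- lower bound for W, upper bound for M
      have hlow : ∀ v : Fin N → ℂ, c * ‖v‖ ^ 2 ≤ (star v ⬝ᵥ (W *ᵥ v)).re := by
        intro v
        by_cases hv : v = 0
        · subst hv; simp
        · set n : ℝ := ‖v‖ with hn_def
          have hn : 0 < n := norm_pos_iff.mpr hv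
          set u : Fin N → ℂ := n⁻¹ • v with hu_def
          have hu_mem : u ∈ Metric.sphere (0 : Fin N → ℂ) 1 := by
            rw [mem_sphere_zero_iff_norm, hu_def, norm_smul, Real.norm_eq_abs, abs_inv,
              abs_of_pos hn, ← hn_def]
            exact inv_mul_cancel₀ (ne_of_gt hn)
          have hv_eq : v = n • u := by
            rw [hu_def, smul_smul, mul_inv_cancel₀ (ne_of_gt hn), one_smul]
          have hs : (star v ⬝ᵥ (W *ᵥ v)).re = n ^ 2 * (star u ⬝ᵥ (W *ᵥ u)).re := by
            conv_lhs => rw [hv_eq]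
            rw [hscale]
          calc c * ‖v‖ ^ 2 = n ^ 2 * c := by rw [← hn_def]; ring
            _ ≤ n ^ 2 * (star u ⬝ᵥ (W *ᵥ u)).re := by
                have := hvmin hu_mem
                exact mul_le_mul_of_nonneg_left this (sq_nonneg n)
            _ = (star v ⬝ᵥ (W *ᵥ v)).re := hs.symm
      have hup : ∀ v : Fin N → ℂ, (star v ⬝ᵥ (M *ᵥ v)).re ≤ C * ‖v‖ ^ 2 := by
        intro v
        by_cases hv : v = 0
        · subst hv; simp
        · set n : ℝ := ‖v‖ with hn_def
          have hn : 0 < n := norm_pos_iff.mpr hv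
          set u : Fin N → ℂ := n⁻¹ • v with hu_def
          have hu_mem : u ∈ Metric.sphere (0 : Fin N → ℂ) 1 := by
            rw [mem_sphere_zero_iff_norm, hu_def, norm_smul, Real.norm_eq_abs, abs_inv,
              abs_of_pos hn, ← hn_def]
            exact inv_mul_cancel₀ (ne_of_gt hn)
          have hv_eq : v = n • u := by
            rw [hu_def, smul_smul, mul_inv_cancel₀ (ne_of_gt hn), one_smul]
          have hs : (star v ⬝ᵥ (M *ᵥ v)).re = n ^ 2 * (star u ⬝ᵥ (M *ᵥ u)).re := by
            conv_lhs => rw [hv_eq]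
            rw [hscale]
          calc (star v ⬝ᵥ (M *ᵥ v)).re = n ^ 2 * (star u ⬝ᵥ (M *ᵥ u)).re := hs
            _ ≤ n ^ 2 * C := mul_le_mul_of_nonneg_left (hvmax hu_mem) (sq_nonneg n)
            _ = C * ‖v‖ ^ 2 := by rw [← hn_def]; ring
      set r : ℝ := 1 - c / C with hr_def
      have hr0 : 0 ≤ r := by
        rw [hr_def, sub_nonneg, div_le_one hC]; exact hcC
      have hr1 : r < 1 := by
        rw [hr_def]
        have : 0 < c / C := div_pos hc hC
        linarith
      -- one-step contraction
      have hstep : ∀ v : Fin N → ℂ,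
          (star ((1 - M⁻¹ * W) *ᵥ v) ⬝ᵥ (M *ᵥ ((1 - M⁻¹ * W) *ᵥ v))).re
            ≤ r * (star v ⬝ᵥ (M *ᵥ v)).re := by
        intro v
        rw [move M (1 - M⁻¹ * W) v, hSid]
        have hsplit : star v ⬝ᵥ (((M - W) - (W - W * M⁻¹ * W)) *ᵥ v)
            = star v ⬝ᵥ (M *ᵥ v) - star v ⬝ᵥ (W *ᵥ v)
              - star v ⬝ᵥ ((W - W * M⁻¹ * W) *ᵥ v) := by
          rw [Matrix.sub_mulVec, Matrix.sub_mulVec, dotProduct_sub,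
            dotProduct_sub]
        rw [hsplit]
        simp only [Complex.sub_re]
        have h1 : 0 ≤ (star v ⬝ᵥ ((W - W * M⁻¹ * W) *ᵥ v)).re := hrePSD hKpsd v
        have h2 := hlow v
        have h3 := hup v
        have h4 : c / C * C = c := div_mul_cancel₀ c (ne_of_gt hC)
        have h5 : c / C * (star v ⬝ᵥ (M *ᵥ v)).re ≤ c * ‖v‖ ^ 2 := by
          have := mul_le_mul_of_nonneg_left h3 (le_of_lt (div_pos hc hC))
          calc c / C * (star v ⬝ᵥ (M *ᵥ v)).re ≤ c / C * (C * ‖v‖ ^ 2) := this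
            _ = c * ‖v‖ ^ 2 := by field_simp
        rw [hr_def]
        nlinarith [h1, h2, h5]
      -- the error recursion
      have herec : ∀ t, μ (t + 1) - W⁻¹ *ᵥ b
          = (1 - M⁻¹ * W) *ᵥ (μ t - W⁻¹ *ᵥ b) := by
        intro t
        have hAux : W *ᵥ μ t - b = W *ᵥ (μ t - W⁻¹ *ᵥ b) := by
          rw [Matrix.mulVec_sub, hWμs]
        rw [hrec t, hAux, Matrix.sub_mulVec, Matrix.one_mulVec, ← Matrix.mulVec_mulVec]
        abel
      set Q0 : ℝ := (star (μ 0 - W⁻¹ *ᵥ b) ⬝ᵥ (M *ᵥ (μ 0 - W⁻¹ *ᵥ b))).re with hQ0_def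
      have hQ : ∀ t, (star (μ t - W⁻¹ *ᵥ b) ⬝ᵥ (M *ᵥ (μ t - W⁻¹ *ᵥ b))).re ≤ r ^ t * Q0 := by
        intro t
        induction t with
        | zero => simp [hQ0_def]
        | succ t ih =>
          rw [herec t]
          calc (star ((1 - M⁻¹ * W) *ᵥ (μ t - W⁻¹ *ᵥ b)) ⬝ᵥ
                (M *ᵥ ((1 - M⁻¹ * W) *ᵥ (μ t - W⁻¹ *ᵥ b)))).re
              ≤ r * (star (μ t - W⁻¹ *ᵥ b) ⬝ᵥ (M *ᵥ (μ t - W⁻¹ *ᵥ b))).re := hstep _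
            _ ≤ r * (r ^ t * Q0) := mul_le_mul_of_nonneg_left ih hr0
            _ = r ^ (t + 1) * Q0 := by ring
      have hbound : ∀ t, ‖μ t - W⁻¹ *ᵥ b‖ ^ 2 ≤ Q0 / c * r ^ t := by
        intro t
        have h1 := hlow (μ t - W⁻¹ *ᵥ b)
        have h2 := hfWM (μ t - W⁻¹ *ᵥ b)
        have h3 := hQ t
        rw [div_mul_eq_mul_div, le_div_iff₀ hc]
        nlinarith
      have htend2 : Tendsto (fun t => ‖μ t - W⁻¹ *ᵥ b‖ ^ 2) atTop (𝓝 0) := by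
        have hg : Tendsto (fun t : ℕ => Q0 / c * r ^ t) atTop (𝓝 0) := by
          have := (tendsto_pow_atTop_nhds_zero_of_lt_one hr0 hr1).const_mul (Q0 / c)
          simpa using this
        exact squeeze_zero (fun t => sq_nonneg _) hbound hg
      have htend : Tendsto (fun t => ‖μ t - W⁻¹ *ᵥ b‖) atTop (𝓝 0) := by
        have h := (Real.continuous_sqrt.tendsto 0).comp htend2
        have heq : (Real.sqrt ∘ fun t => ‖μ t - W⁻¹ *ᵥ b‖ ^ 2)
            = fun t => ‖μ t - W⁻¹ *ᵥ b‖ := by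
          funext t; exact Real.sqrt_sq (norm_nonneg _)
        rw [heq] at h
        simpa using h
      rw [tendsto_iff_norm_sub_tendsto_zero]
      exact htend
  · -- global minimizer
    intro φ hφ
    have h1 : ∀ μ : Fin N → ℂ, star (W⁻¹ *ᵥ b) ⬝ᵥ (W *ᵥ μ) = star (star μ ⬝ᵥ b) := by
      intro μ
      rw [star_dotProduct, star_mulVec, hW.isHermitian.eq, ← Matrix.dotProduct_mulVec, hWμs]
    have key : ∀ μ : Fin N → ℂ, φ μ = φ (W⁻¹ *ᵥ b)
        + (star (μ - W⁻¹ *ᵥ b) ⬝ᵥ (W *ᵥ (μ - W⁻¹ *ᵥ b))).re := by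
      intro μ
      rw [hφ μ, hφ (W⁻¹ *ᵥ b)]
      have e1 : star (μ - W⁻¹ *ᵥ b) ⬝ᵥ (W *ᵥ (μ - W⁻¹ *ᵥ b))
          = star μ ⬝ᵥ (W *ᵥ μ) - star μ ⬝ᵥ b - star (star μ ⬝ᵥ b)
            + star (W⁻¹ *ᵥ b) ⬝ᵥ b := by
        rw [Matrix.mulVec_sub, hWμs, star_sub, sub_dotProduct,
          dotProduct_sub, dotProduct_sub, h1 μ]
        ring
      have e2 : star (W⁻¹ *ᵥ b) ⬝ᵥ (W *ᵥ (W⁻¹ *ᵥ b)) = star (W⁻¹ *ᵥ b) ⬝ᵥ b := by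
        rw [hWμs]
      rw [e1, e2]
      simp only [Complex.add_re, Complex.sub_re, Complex.star_def, Complex.conj_re]
      ring
    constructor
    · intro μ
      rw [key μ]
      have := hrePSD hW.posSemidef (μ - W⁻¹ *ᵥ b)
      linarith
    · intro μ hμ
      by_contra hne
      have hd : μ - W⁻¹ *ᵥ b ≠ 0 := sub_ne_zero.mpr hne
      have hpos := hrePD hW (μ - W⁻¹ *ᵥ b) hd
      rw [key μ] at hμ
      linarith
end

section
/- Let X and Y be nonempty finite sets, let p : X×Y → (0,∞), and let q₂ be a probability mass function on Y. Define g(x) = exp(Σ_{y∈Y} q₂(y)·ln p(x,y)) and q₁*(x) = g(x)/Σ_{x'∈X} g(x'). Then for every probability mass function q₁ on X (with the convention 0·ln 0 = 0), Σ_{x∈X}Σ_{y∈Y} q₁(x)q₂(y)·ln( q₁(x)q₂(y) / p(x,y) ) = Σ_{x∈X} q₁(x)·ln( q₁(x)/q₁*(x) ) + C, where C = Σ_{y∈Y} q₂(y)·ln q₂(y) − ln(Σ_{x'∈X} g(x')) does not depend on q₁. Consequently q₁* is the unique probability mass function minimizing q₁ ↦ Σ_{x,y} q₁(x)q₂(y)·ln(q₁(x)q₂(y)/p(x,y)).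 -/
open Finset

lemma gibbs_pt {q r : ℝ} (hq : 0 ≤ q) (hr : 0 < r) :
    q - r ≤ q * Real.log (q / r) := by
  rcases eq_or_lt_of_le hq with h | h
  · simp [← h]; linarith
  · have h1 : Real.log (r / q) ≤ r / q - 1 :=
      Real.log_le_sub_one_of_pos (by positivity)
    have h2 : Real.log (q / r) = Real.log q - Real.log r :=
      Real.log_div h.ne' hr.ne'
    have h3 : Real.log (r / q) = Real.log r - Real.log q :=
      Real.log_div hr.ne' h.ne'
    rw [h3] at h1
    have h4 : q * (Real.log r - Real.log q) ≤ q * (r / q - 1) :=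
      mul_le_mul_of_nonneg_left h1 hq
    have h5 : q * (r / q - 1) = r - q := by field_simp
    rw [h2]; nlinarith

lemma gibbs_pt_strict {q r : ℝ} (hq : 0 ≤ q) (hr : 0 < r) (hne : q ≠ r) :
    q - r < q * Real.log (q / r) := by
  rcases eq_or_lt_of_le hq with h | h
  · simp [← h]; linarith
  · have hne' : r / q ≠ 1 := by
      intro hc
      exact hne (by field_simp at hc; linarith)
    have h1 : Real.log (r / q) < r / q - 1 :=
      Real.log_lt_sub_one_of_pos (by positivity) hne'
    have h2 : Real.log (q / r) = Real.log q - Real.log r :=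
      Real.log_div h.ne' hr.ne'
    have h3 : Real.log (r / q) = Real.log r - Real.log q :=
      Real.log_div hr.ne' h.ne'
    rw [h3] at h1
    have h4 : q * (Real.log r - Real.log q) < q * (r / q - 1) :=
      (mul_lt_mul_iff_right₀ h).mpr h1
    have h5 : q * (r / q - 1) = r - q := by field_simp
    rw [h2]; nlinarith

lemma gibbs_le {X : Type*} [Fintype X] (q r : X → ℝ) (hq0 : ∀ x, 0 ≤ q x)
    (hr0 : ∀ x, 0 < r x) (hq1 : ∑ x, q x = 1) (hr1 : ∑ x, r x = 1) :
    0 ≤ ∑ x, q x * Real.log (q x / r x) := by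
  have h := Finset.sum_le_sum (s := Finset.univ) (fun x _ => gibbs_pt (hq0 x) (hr0 x))
  rw [Finset.sum_sub_distrib, hq1, hr1] at h
  linarith

lemma gibbs_lt {X : Type*} [Fintype X] (q r : X → ℝ) (hq0 : ∀ x, 0 ≤ q x)
    (hr0 : ∀ x, 0 < r x) (hq1 : ∑ x, q x = 1) (hr1 : ∑ x, r x = 1)
    (hne : q ≠ r) :
    0 < ∑ x, q x * Real.log (q x / r x) := by
  obtain ⟨x₀, hx₀⟩ := Function.ne_iff.mp hne
  have h := Finset.sum_lt_sum (s := Finset.univ) (fun x _ => gibbs_pt (hq0 x) (hr0 x))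
    ⟨x₀, Finset.mem_univ _, gibbs_pt_strict (hq0 x₀) (hr0 x₀) hx₀⟩
  rw [Finset.sum_sub_distrib, hq1, hr1] at h
  linarith



/-- **Mean-field VBI optimality (finite spaces).** With `p : X×Y → (0,∞)` and a pmf `q₂`
on `Y`, let `g(x) = exp(Σ_y q₂(y)·ln p(x,y))` and `q₁*(x) = g(x)/Σ_{x'} g(x')`. Then for
every pmf `q₁` on `X`,
`Σ_{x,y} q₁(x)q₂(y)·ln(q₁(x)q₂(y)/p(x,y)) = Σ_x q₁(x)·ln(q₁(x)/q₁*(x)) + C` with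
`C = Σ_y q₂(y)·ln q₂(y) − ln(Σ_{x'} g(x'))`, and consequently `q₁*` is the unique pmf
minimizing the left-hand side. -/
theorem stmt6 {X Y : Type*} [Fintype X] [Fintype Y] [Nonempty X] [Nonempty Y]
    (p : X × Y → ℝ) (hp : ∀ z, 0 < p z)
    (q₂ : Y → ℝ) (hq₂0 : ∀ y, 0 ≤ q₂ y) (hq₂1 : ∑ y, q₂ y = 1) :
    ∀ g : X → ℝ, (∀ x, g x = Real.exp (∑ y, q₂ y * Real.log (p (x, y)))) →
    ∀ q₁s : X → ℝ, (∀ x, q₁s x = g x / ∑ x', g x') →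
      ((∀ q₁ : X → ℝ, (∀ x, 0 ≤ q₁ x) → ∑ x, q₁ x = 1 →
          ∑ x, ∑ y, q₁ x * q₂ y * Real.log (q₁ x * q₂ y / p (x, y))
            = (∑ x, q₁ x * Real.log (q₁ x / q₁s x))
              + ((∑ y, q₂ y * Real.log (q₂ y)) - Real.log (∑ x', g x'))) ∧
        (∀ x, 0 ≤ q₁s x) ∧ (∑ x, q₁s x = 1) ∧
        (∀ q₁ : X → ℝ, (∀ x, 0 ≤ q₁ x) → ∑ x, q₁ x = 1 →
          ∑ x, ∑ y, q₁s x * q₂ y * Real.log (q₁s x * q₂ y / p (x, y))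
            ≤ ∑ x, ∑ y, q₁ x * q₂ y * Real.log (q₁ x * q₂ y / p (x, y))) ∧
        (∀ q₁ : X → ℝ, (∀ x, 0 ≤ q₁ x) → ∑ x, q₁ x = 1 →
          (∑ x, ∑ y, q₁ x * q₂ y * Real.log (q₁ x * q₂ y / p (x, y))
            = ∑ x, ∑ y, q₁s x * q₂ y * Real.log (q₁s x * q₂ y / p (x, y))) →
          q₁ = q₁s)) := by
  intro g hg q₁s hq₁s
  have hgpos : ∀ x, 0 < g x := fun x => (hg x) ▸ Real.exp_pos _
  have hGpos : 0 < ∑ x', g x' :=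
    Finset.sum_pos (fun x _ => hgpos x) Finset.univ_nonempty
  have hq₁spos : ∀ x, 0 < q₁s x := fun x => (hq₁s x) ▸ div_pos (hgpos x) hGpos
  have hq₁s1 : ∑ x, q₁s x = 1 := by
    simp only [hq₁s]
    rw [← Finset.sum_div, div_self hGpos.ne']
  have hlogg : ∀ x, Real.log (g x) = ∑ y, q₂ y * Real.log (p (x, y)) := by
    intro x; rw [hg x, Real.log_exp]
  have hlogq₁s : ∀ x, Real.log (q₁s x)
      = Real.log (g x) - Real.log (∑ x', g x') := by
    intro x; rw [hq₁s x, Real.log_div (hgpos x).ne' hGpos.ne']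
  -- the key identity
  have key : ∀ q₁ : X → ℝ, (∀ x, 0 ≤ q₁ x) → ∑ x, q₁ x = 1 →
      ∑ x, ∑ y, q₁ x * q₂ y * Real.log (q₁ x * q₂ y / p (x, y))
        = (∑ x, q₁ x * Real.log (q₁ x / q₁s x))
          + ((∑ y, q₂ y * Real.log (q₂ y)) - Real.log (∑ x', g x')) := by
    intro q₁ hq₁0 hq₁1
    have inner : ∀ x, ∑ y, q₁ x * q₂ y * Real.log (q₁ x * q₂ y / p (x, y))
        = q₁ x * Real.log (q₁ x) + q₁ x * (∑ y, q₂ y * Real.log (q₂ y))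
          - q₁ x * Real.log (g x) := by
      intro x
      rcases eq_or_lt_of_le (hq₁0 x) with h | h
      · simp [← h]
      · have : ∀ y ∈ Finset.univ,
            q₁ x * q₂ y * Real.log (q₁ x * q₂ y / p (x, y))
            = q₁ x * (q₂ y * Real.log (q₁ x)) + q₁ x * (q₂ y * Real.log (q₂ y))
              - q₁ x * (q₂ y * Real.log (p (x, y))) := by
          intro y _
          rcases eq_or_lt_of_le (hq₂0 y) with h2 | h2
          · simp [← h2]
          · rw [Real.log_div (by positivity) (hp (x, y)).ne',
              Real.log_mul h.ne' h2.ne']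
            ring
        rw [Finset.sum_congr rfl this]
        rw [Finset.sum_sub_distrib, Finset.sum_add_distrib,
          ← Finset.mul_sum, ← Finset.mul_sum, ← Finset.mul_sum,
          ← Finset.sum_mul, hq₂1, one_mul, hlogg x]
    have hrhs : ∀ x, q₁ x * Real.log (q₁ x / q₁s x)
        = q₁ x * Real.log (q₁ x) - q₁ x * Real.log (g x)
          + q₁ x * Real.log (∑ x', g x') := by
      intro x
      rcases eq_or_lt_of_le (hq₁0 x) with h | h
      · simp [← h]
      · rw [Real.log_div h.ne' (hq₁spos x).ne', hlogq₁s x]; ring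
    calc ∑ x, ∑ y, q₁ x * q₂ y * Real.log (q₁ x * q₂ y / p (x, y))
        = ∑ x, (q₁ x * Real.log (q₁ x) + q₁ x * (∑ y, q₂ y * Real.log (q₂ y))
            - q₁ x * Real.log (g x)) := Finset.sum_congr rfl fun x _ => inner x
      _ = (∑ x, q₁ x * Real.log (q₁ x)) + (∑ y, q₂ y * Real.log (q₂ y))
            - ∑ x, q₁ x * Real.log (g x) := by
          rw [Finset.sum_sub_distrib, Finset.sum_add_distrib,
            ← Finset.sum_mul, hq₁1, one_mul]
      _ = (∑ x, (q₁ x * Real.log (q₁ x) - q₁ x * Real.log (g x)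
            + q₁ x * Real.log (∑ x', g x')))
            + ((∑ y, q₂ y * Real.log (q₂ y)) - Real.log (∑ x', g x')) := by
          rw [Finset.sum_add_distrib, Finset.sum_sub_distrib,
            ← Finset.sum_mul, hq₁1, one_mul]
          ring
      _ = (∑ x, q₁ x * Real.log (q₁ x / q₁s x))
            + ((∑ y, q₂ y * Real.log (q₂ y)) - Real.log (∑ x', g x')) := by
          rw [Finset.sum_congr rfl fun x _ => (hrhs x).symm]
  have hKLself : ∑ x, q₁s x * Real.log (q₁s x / q₁s x) = 0 := by
    apply Finset.sum_eq_zero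
    intro x _
    rw [div_self (hq₁spos x).ne', Real.log_one, mul_zero]
  refine ⟨key, fun x => (hq₁spos x).le, hq₁s1, ?_, ?_⟩
  · intro q₁ hq₁0 hq₁1
    rw [key q₁ hq₁0 hq₁1, key q₁s (fun x => (hq₁spos x).le) hq₁s1, hKLself]
    have := gibbs_le q₁ q₁s hq₁0 hq₁spos hq₁1 hq₁s1
    linarith
  · intro q₁ hq₁0 hq₁1 heq
    by_contra hne
    rw [key q₁ hq₁0 hq₁1, key q₁s (fun x => (hq₁spos x).le) hq₁s1, hKLself]
      at heq
    have := gibbs_lt q₁ q₁s hq₁0 hq₁spos hq₁1 hq₁s1 hne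
    linarith
end

section
/- Let (Ω, 𝔽, P) be a probability space. Let x : Ω → ℂ^N be a random vector whose entries and pairwise products of entries are integrable, with mean μ_x and central second moments Σ_x (Σ_{x,mn} = E[(x_m − μ_{x,m})·conj(x_n − μ_{x,n})]). For j = 1,…,B let θʲ : Ω → ℝ^N be random vectors whose entries and pairwise products of entries are integrable, with means μ̂ʲ and covariance matrices Σʲ, such that x, θ¹, …, θᴮ are mutually independent. Let F₀ and A¹,…,Aᴮ be M×N complex matrices, y ∈ ℂ^M, and define the random matrix F̄ = F₀ + Σ_{j=1}^{B} Aʲ·diag(θʲ − μ̂ʲ) and the matrix H = F₀ᴴF₀ + Σ_{j=1}^{B} (AʲᴴAʲ) ⊙ Σʲ. Then E[‖y − F̄x‖²] = ‖y‖² − 2·Re{μ_xᴴF₀ᴴy} + μ_xᴴHμ_x + Tr(HΣ_x). -/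
open Matrix MeasureTheory ProbabilityTheory

lemma aux_integral_mul_c {Ω : Type*} {mΩ : MeasurableSpace Ω} {μ : Measure Ω}
    {X Y : Ω → ℂ} (h : IndepFun X Y μ) (hX : Integrable X μ) (hY : Integrable Y μ) :
    ∫ ω, X ω * Y ω ∂μ = (∫ ω, X ω ∂μ) * ∫ ω, Y ω ∂μ := by
  have hmul : Integrable (fun ω => X ω * Y ω) μ := h.integrable_mul hX hY
  have h1 : IndepFun (fun ω => (X ω).re) (fun ω => (Y ω).re) μ :=
    h.comp Complex.measurable_re Complex.measurable_re
  have h2 : IndepFun (fun ω => (X ω).re) (fun ω => (Y ω).im) μ :=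
    h.comp Complex.measurable_re Complex.measurable_im
  have h3 : IndepFun (fun ω => (X ω).im) (fun ω => (Y ω).re) μ :=
    h.comp Complex.measurable_im Complex.measurable_re
  have h4 : IndepFun (fun ω => (X ω).im) (fun ω => (Y ω).im) μ :=
    h.comp Complex.measurable_im Complex.measurable_im
  have hXre : Integrable (fun ω => (X ω).re) μ := hX.re
  have hXim : Integrable (fun ω => (X ω).im) μ := hX.im
  have hYre : Integrable (fun ω => (Y ω).re) μ := hY.re
  have hYim : Integrable (fun ω => (Y ω).im) μ := hY.im
  have ire : ∀ {f : Ω → ℂ}, Integrable f μ → ∫ ω, (f ω).re ∂μ = (∫ ω, f ω ∂μ).re := by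
    intro f hf
    simpa using integral_re hf (𝕜 := ℂ)
  have iim : ∀ {f : Ω → ℂ}, Integrable f μ → ∫ ω, (f ω).im ∂μ = (∫ ω, f ω ∂μ).im := by
    intro f hf
    simpa using integral_im hf (𝕜 := ℂ)
  have e1 : ∫ ω, (X ω).re * (Y ω).re ∂μ = (∫ ω, X ω ∂μ).re * (∫ ω, Y ω ∂μ).re := by
    rw [← ire hX, ← ire hY]; exact h1.integral_fun_mul_eq_mul_integral hXre.aestronglyMeasurable hYre.aestronglyMeasurable
  have e2 : ∫ ω, (X ω).re * (Y ω).im ∂μ = (∫ ω, X ω ∂μ).re * (∫ ω, Y ω ∂μ).im := by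
    rw [← ire hX, ← iim hY]; exact h2.integral_fun_mul_eq_mul_integral hXre.aestronglyMeasurable hYim.aestronglyMeasurable
  have e3 : ∫ ω, (X ω).im * (Y ω).re ∂μ = (∫ ω, X ω ∂μ).im * (∫ ω, Y ω ∂μ).re := by
    rw [← iim hX, ← ire hY]; exact h3.integral_fun_mul_eq_mul_integral hXim.aestronglyMeasurable hYre.aestronglyMeasurable
  have e4 : ∫ ω, (X ω).im * (Y ω).im ∂μ = (∫ ω, X ω ∂μ).im * (∫ ω, Y ω ∂μ).im := by
    rw [← iim hX, ← iim hY]; exact h4.integral_fun_mul_eq_mul_integral hXim.aestronglyMeasurable hYim.aestronglyMeasurable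
  apply Complex.ext
  · rw [← ire hmul, Complex.mul_re, ← e1, ← e4]
    simp only [Complex.mul_re]
    exact integral_sub (h1.integrable_mul hXre hYre) (h4.integrable_mul hXim hYim)
  · rw [← iim hmul, Complex.mul_im, ← e2, ← e3]
    simp only [Complex.mul_im]
    exact integral_add (h2.integrable_mul hXre hYim) (h3.integrable_mul hXim hYre)

/-- **Expected residual energy under the linearized model (eq. (33)).** With `x : Ω → ℂ^N`
(mean `μ_x`, central second moments `Σ_x`) and mutually independent real random vectors
`θʲ` (means `μ̂ʲ`, covariances `Σʲ`), all mutually independent of `x`, and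
`F̄ = F₀ + Σⱼ Aʲ·diag(θʲ − μ̂ʲ)`, `H = F₀ᴴF₀ + Σⱼ (AʲᴴAʲ) ⊙ Σʲ`, one has
`E[‖y − F̄x‖²] = ‖y‖² − 2·Re{μ_xᴴF₀ᴴy} + μ_xᴴHμ_x + Tr(HΣ_x)`. -/
theorem stmt15 {Ω : Type*} [MeasureSpace Ω]
    [IsProbabilityMeasure (volume : Measure Ω)] {B M N : ℕ}
    (x : Ω → Fin N → ℂ) (θ : Fin B → Ω → Fin N → ℝ)
    (hintx1 : ∀ n, Integrable (fun ω => x ω n))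
    (hintx2 : ∀ m n, Integrable (fun ω => x ω m * (starRingEnd ℂ) (x ω n)))
    (hintθ1 : ∀ j i, Integrable (fun ω => θ j ω i))
    (hintθ2 : ∀ j j' i i', Integrable (fun ω => θ j ω i * θ j' ω i'))
    (hindθ : iIndepFun θ volume)
    (hindx : IndepFun x (fun ω j => θ j ω) volume)
    (μx : Fin N → ℂ) (hmeanx : ∀ n, (∫ ω, x ω n) = μx n)
    (Sigx : Matrix (Fin N) (Fin N) ℂ)
    (hcovx : ∀ m n, (∫ ω, (x ω m - μx m) * (starRingEnd ℂ) (x ω n - μx n)) = Sigx m n)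
    (μhat : Fin B → Fin N → ℝ) (hmeanθ : ∀ j i, (∫ ω, θ j ω i) = μhat j i)
    (Sigθ : Fin B → Matrix (Fin N) (Fin N) ℝ)
    (hcovθ : ∀ j m n, (∫ ω, (θ j ω m - μhat j m) * (θ j ω n - μhat j n)) = Sigθ j m n)
    (F₀ : Matrix (Fin M) (Fin N) ℂ) (A : Fin B → Matrix (Fin M) (Fin N) ℂ)
    (y : Fin M → ℂ) :
    ∀ Fbar : Ω → Matrix (Fin M) (Fin N) ℂ,
      (∀ ω, Fbar ω = F₀ + ∑ j, A j *
          Matrix.diagonal (fun i => ((θ j ω i - μhat j i : ℝ) : ℂ))) →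
      ∀ Hm : Matrix (Fin N) (Fin N) ℂ,
        Hm = F₀ᴴ * F₀ + ∑ j, ((A j)ᴴ * A j).hadamard
            ((Sigθ j).map (fun r => (r : ℂ))) →
        ((∫ ω, ∑ i, ‖(y - Fbar ω *ᵥ x ω) i‖ ^ 2 : ℝ) : ℂ)
          = ((∑ i, ‖y i‖ ^ 2 : ℝ) : ℂ)
            - 2 * (((star μx ⬝ᵥ (F₀ᴴ *ᵥ y)).re : ℝ) : ℂ)
            + star μx ⬝ᵥ (Hm *ᵥ μx) + Matrix.trace (Hm * Sigx) := by
  intro Fbar hFbar Hm hHm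
  classical
  have intOfReal : ∀ f : Ω → ℝ, (∫ ω, ((f ω : ℝ) : ℂ)) = ((∫ ω, f ω : ℝ) : ℂ) :=
    fun f => integral_ofReal
  set c : Fin B → Fin N → Ω → ℂ := fun j n ω => ((θ j ω n - μhat j n : ℝ) : ℂ) with hcdef
  set G : Fin M → Fin N → Ω → ℂ := fun i n ω => F₀ i n + ∑ j, A j i n * c j n ω with hGdef
  -- measurability of the θ-composites
  have measc : ∀ (j : Fin B) (n : Fin N),
      Measurable (fun v : Fin B → Fin N → ℝ => ((v j n - μhat j n : ℝ) : ℂ)) := fun j n =>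
    Complex.measurable_ofReal.comp ((measurable_pi_apply j).eval.fun_sub measurable_const)
  have measG : ∀ (i : Fin M) (n : Fin N),
      Measurable (fun v : Fin B → Fin N → ℝ =>
        F₀ i n + ∑ j, A j i n * ((v j n - μhat j n : ℝ) : ℂ)) := fun i n =>
    measurable_const.fun_add (Finset.measurable_sum _ fun j _ => (measc j n).const_mul _)
  -- integrability of the basic pieces
  have hintd : ∀ j n, Integrable (fun ω => θ j ω n - μhat j n) := fun j n =>
    (hintθ1 j n).sub (integrable_const _)
  have hintc : ∀ j n, Integrable (c j n) := fun j n => (hintd j n).ofReal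
  have hintdd : ∀ j j' n n',
      Integrable (fun ω => (θ j ω n - μhat j n) * (θ j' ω n' - μhat j' n')) := by
    intro j j' n n'
    have e : (fun ω => (θ j ω n - μhat j n) * (θ j' ω n' - μhat j' n'))
        = fun ω => θ j ω n * θ j' ω n' - μhat j' n' * θ j ω n - μhat j n * θ j' ω n'
          + μhat j n * μhat j' n' := by funext ω; ring
    rw [e]
    exact (((hintθ2 j j' n n').sub ((hintθ1 j n).const_mul _)).sub
      ((hintθ1 j' n').const_mul _)).add (integrable_const _)
  have hintcc : ∀ j j' n n', Integrable (fun ω => c j n ω * c j' n' ω) := by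
    intro j j' n n'
    have e : (fun ω => c j n ω * c j' n' ω)
        = fun ω => (((θ j ω n - μhat j n) * (θ j' ω n' - μhat j' n') : ℝ) : ℂ) := by
      funext ω; simp only [hcdef]; push_cast; ring
    rw [e]; exact (hintdd j j' n n').ofReal
  have hintG : ∀ i n, Integrable (G i n) := fun i n =>
    (integrable_const _).add (integrable_finset_sum _ fun j _ => (hintc j n).const_mul _)
  -- means of the basic pieces
  have hd0 : ∀ j n, (∫ ω, (θ j ω n - μhat j n)) = 0 := by
    intro j n
    rw [integral_sub (hintθ1 j n) (integrable_const _), hmeanθ, integral_const]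
    simp
  have hc0 : ∀ j n, (∫ ω, c j n ω) = 0 := by
    intro j n
    simp only [hcdef]
    rw [intOfReal, hd0]
    norm_num
  have hdd : ∀ j j' n n', (∫ ω, (θ j ω n - μhat j n) * (θ j' ω n' - μhat j' n'))
      = if j = j' then Sigθ j n n' else 0 := by
    intro j j' n n'
    by_cases hjj : j = j'
    · subst hjj; simp [hcovθ j n n']
    · simp only [hjj, if_false]
      have hind : IndepFun (fun ω => θ j ω n - μhat j n)
          (fun ω => θ j' ω n' - μhat j' n') volume := by
        exact (hindθ.indepFun hjj).comp (φ := fun v : Fin N → ℝ => v n - μhat j n)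
          (ψ := fun v : Fin N → ℝ => v n' - μhat j' n')
          ((measurable_pi_apply n).fun_sub measurable_const)
          ((measurable_pi_apply n').fun_sub measurable_const)
      have h2 := hind.integral_fun_mul_eq_mul_integral (hintd j n).aestronglyMeasurable (hintd j' n').aestronglyMeasurable
      simpa [Pi.mul_apply, hd0 j n, hd0 j' n'] using h2
  have hcc : ∀ j j' n n', (∫ ω, c j n ω * c j' n' ω)
      = if j = j' then ((Sigθ j n n' : ℝ) : ℂ) else 0 := by
    intro j j' n n'
    have e : (fun ω => c j n ω * c j' n' ω)
        = fun ω => (((θ j ω n - μhat j n) * (θ j' ω n' - μhat j' n') : ℝ) : ℂ) := by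
      funext ω; simp only [hcdef]; push_cast; ring
    rw [e, intOfReal, hdd]
    split_ifs <;> norm_num
  have hGI : ∀ i n, (∫ ω, G i n ω) = F₀ i n := by
    intro i n
    simp only [hGdef]
    rw [integral_add (integrable_const _)
        (integrable_finset_sum _ fun j _ => (hintc j n).const_mul _), integral_const,
      integral_finset_sum _ fun j _ => (hintc j n).const_mul _]
    simp [integral_const_mul, hc0]
  -- conjugate-integrability for x
  have hxconj : ∀ n, Integrable (fun ω => (starRingEnd ℂ) (x ω n)) := by
    intro n
    have e : (fun ω => (starRingEnd ℂ) (x ω n))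
        = fun ω => (((x ω n).re : ℝ) : ℂ) - (((x ω n).im : ℝ) : ℂ) * Complex.I := by
      funext ω; apply Complex.ext <;> simp
    rw [e]
    exact ((hintx1 n).re.ofReal).sub (((hintx1 n).im.ofReal).mul_const _)
  have hPI : ∀ n n', (∫ ω, x ω n * (starRingEnd ℂ) (x ω n'))
      = Sigx n n' + μx n * (starRingEnd ℂ) (μx n') := by
    intro n n'
    have e : (fun ω => (x ω n - μx n) * (starRingEnd ℂ) (x ω n' - μx n'))
        = fun ω => x ω n * (starRingEnd ℂ) (x ω n') - (starRingEnd ℂ) (μx n') * x ω n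
          - μx n * (starRingEnd ℂ) (x ω n') + μx n * (starRingEnd ℂ) (μx n') := by
      funext ω; rw [map_sub]; ring
    have h2 := hcovx n n'
    rw [e] at h2
    have i1 : (∫ ω, (starRingEnd ℂ) (μx n') * x ω n) = (starRingEnd ℂ) (μx n') * μx n := by
      rw [integral_const_mul, hmeanx]
    have i2 : (∫ ω, μx n * (starRingEnd ℂ) (x ω n')) = μx n * (starRingEnd ℂ) (μx n') := by
      rw [integral_const_mul, integral_conj, hmeanx]
    have ia : Integrable (fun ω => x ω n * (starRingEnd ℂ) (x ω n')
        - (starRingEnd ℂ) (μx n') * x ω n) volume := by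
      exact (hintx2 n n').sub ((hintx1 n).const_mul _)
    have ib : Integrable (fun ω => x ω n * (starRingEnd ℂ) (x ω n')
        - (starRingEnd ℂ) (μx n') * x ω n - μx n * (starRingEnd ℂ) (x ω n')) volume := by
      exact ia.sub ((hxconj n').const_mul _)
    rw [integral_add ib (integrable_const _),
      integral_sub ia ((hxconj n').const_mul _),
      integral_sub (hintx2 n n') ((hintx1 n).const_mul _), i1, i2, integral_const] at h2
    simp only [measure_univ, ENNReal.toReal_one, probReal_univ, one_smul] at h2
    linear_combination h2
  -- independence composites
  have hindGx : ∀ i n m, IndepFun (G i n) (fun ω => x ω m) volume := by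
    intro i n m
    exact (hindx.comp (measurable_pi_apply m) (measG i n)).symm
  have hintGx : ∀ i n m, Integrable (fun ω => G i n ω * x ω m) := fun i n m =>
    (hindGx i n m).integrable_mul (hintG i n) (hintx1 m)
  have hGxI : ∀ i n, (∫ ω, G i n ω * x ω n) = F₀ i n * μx n := by
    intro i n
    rw [aux_integral_mul_c (hindGx i n n) (hintG i n) (hintx1 n), hGI, hmeanx]
  -- the linear part L
  set L : Ω → ℂ := fun ω => ∑ i, (starRingEnd ℂ) (y i) * ∑ n, G i n ω * x ω n with hLdef
  have hintsL : ∀ i, Integrable (fun ω => ∑ n, G i n ω * x ω n) := fun i =>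
    integrable_finset_sum _ fun n _ => hintGx i n n
  have hintL : Integrable L := by
    simp only [hLdef]
    exact integrable_finset_sum _ fun i _ => (hintsL i).const_mul _
  have hLI : (∫ ω, L ω) = ∑ i, (starRingEnd ℂ) (y i) * ∑ n, F₀ i n * μx n := by
    simp only [hLdef]
    rw [integral_finset_sum _ fun i _ => (hintsL i).const_mul _]
    refine Finset.sum_congr rfl fun i _ => ?_
    rw [integral_const_mul, integral_finset_sum _ fun n _ => hintGx i n n]
    congr 1
    exact Finset.sum_congr rfl fun n _ => hGxI i n
  -- the quadratic part
  have measK : ∀ n n', Measurable (fun v : Fin B → Fin N → ℝ =>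
      ∑ i, (F₀ i n + ∑ j, A j i n * ((v j n - μhat j n : ℝ) : ℂ))
        * (starRingEnd ℂ) (F₀ i n' + ∑ j, A j i n' * ((v j n' - μhat j n' : ℝ) : ℂ))) :=
    fun n n' => Finset.measurable_sum _ fun i _ =>
      (measG i n).fun_mul (Complex.continuous_conj.measurable.comp (measG i n'))
  have measP : ∀ (n n' : Fin N), Measurable (fun v : Fin N → ℂ => v n * (starRingEnd ℂ) (v n')) :=
    fun n n' => (measurable_pi_apply n).fun_mul
      (Complex.continuous_conj.measurable.comp (measurable_pi_apply n'))
  have hindKP : ∀ n n', IndepFun (fun ω => ∑ i, G i n ω * (starRingEnd ℂ) (G i n' ω))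
      (fun ω => x ω n * (starRingEnd ℂ) (x ω n')) volume := fun n n' =>
    (hindx.comp (measP n n') (measK n n')).symm
  have hGconj : ∀ i n ω, (starRingEnd ℂ) (G i n ω)
      = (starRingEnd ℂ) (F₀ i n) + ∑ j, (starRingEnd ℂ) (A j i n) * c j n ω := by
    intro i n ω
    simp [hGdef, hcdef, map_add, map_sum, _root_.map_mul, Complex.conj_ofReal]
  have hGGe : ∀ i n n', (fun ω => G i n ω * (starRingEnd ℂ) (G i n' ω)) = fun ω =>
      (F₀ i n * (starRingEnd ℂ) (F₀ i n')
        + ∑ j, F₀ i n * (starRingEnd ℂ) (A j i n') * c j n' ω)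
      + ((∑ j, (starRingEnd ℂ) (F₀ i n') * A j i n * c j n ω)
        + ∑ j, ∑ j', A j i n * (starRingEnd ℂ) (A j' i n') * (c j n ω * c j' n' ω)) := by
    intro i n n'
    funext ω
    rw [hGconj]
    simp only [hGdef]
    rw [add_mul, mul_add, mul_add, Finset.sum_mul_sum, Finset.mul_sum, Finset.sum_mul]
    congr 1
    · congr 1
      exact Finset.sum_congr rfl fun j _ => by ring
    · congr 1
      · exact Finset.sum_congr rfl fun j _ => by ring
      · exact Finset.sum_congr rfl fun j _ => Finset.sum_congr rfl fun j' _ => by ring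
  have hGGint : ∀ i n n', Integrable (fun ω => G i n ω * (starRingEnd ℂ) (G i n' ω)) := by
    intro i n n'
    rw [hGGe]
    exact ((integrable_const _).add
        (integrable_finset_sum _ fun j _ => (hintc j n').const_mul _)).add
      ((integrable_finset_sum _ fun j _ => (hintc j n).const_mul _).add
        (integrable_finset_sum _ fun j _ => integrable_finset_sum _ fun j' _ =>
          (hintcc j j' n n').const_mul _))
  have hGGI : ∀ i n n', (∫ ω, G i n ω * (starRingEnd ℂ) (G i n' ω))
      = F₀ i n * (starRingEnd ℂ) (F₀ i n')
        + ∑ j, A j i n * (starRingEnd ℂ) (A j i n') * ((Sigθ j n n' : ℝ) : ℂ) := by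
    intro i n n'
    rw [hGGe]
    have i1 : Integrable (fun ω => ∑ j, F₀ i n * (starRingEnd ℂ) (A j i n') * c j n' ω)
        volume := integrable_finset_sum _ fun j _ => (hintc j n').const_mul _
    have i2 : Integrable (fun ω => ∑ j, (starRingEnd ℂ) (F₀ i n') * A j i n * c j n ω)
        volume := integrable_finset_sum _ fun j _ => (hintc j n).const_mul _
    have i3 : Integrable (fun ω => ∑ j, ∑ j', A j i n * (starRingEnd ℂ) (A j' i n')
        * (c j n ω * c j' n' ω)) volume :=
      integrable_finset_sum _ fun j _ => integrable_finset_sum _ fun j' _ =>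
        (hintcc j j' n n').const_mul _
    have i12 : Integrable (fun ω => F₀ i n * (starRingEnd ℂ) (F₀ i n')
        + ∑ j, F₀ i n * (starRingEnd ℂ) (A j i n') * c j n' ω) volume := by
      exact (integrable_const _).add i1
    have i34 : Integrable (fun ω => (∑ j, (starRingEnd ℂ) (F₀ i n') * A j i n * c j n ω)
        + ∑ j, ∑ j', A j i n * (starRingEnd ℂ) (A j' i n') * (c j n ω * c j' n' ω)) volume := by
      exact i2.add i3
    rw [integral_add i12 i34,
      integral_add (integrable_const _) i1,
      integral_add i2 i3,
      integral_const,
      integral_finset_sum _ fun j _ => (hintc j n').const_mul _,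
      integral_finset_sum _ fun j _ => (hintc j n).const_mul _,
      integral_finset_sum _ fun j _ => integrable_finset_sum _ fun j' _ =>
        (hintcc j j' n n').const_mul _]
    simp only [integral_const_mul, hc0, mul_zero, Finset.sum_const_zero, add_zero, zero_add,
      measure_univ, ENNReal.toReal_one, probReal_univ, one_smul]
    congr 1
    refine Finset.sum_congr rfl fun j _ => ?_
    rw [integral_finset_sum _ fun j' _ => (hintcc j j' n n').const_mul _]
    simp [integral_const_mul, hcc, Finset.sum_ite_eq, mul_ite]
  have hSigSym : ∀ j n n', Sigθ j n n' = Sigθ j n' n := by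
    intro j n n'
    have e : (fun ω => (θ j ω n - μhat j n) * (θ j ω n' - μhat j n'))
        = fun ω => (θ j ω n' - μhat j n') * (θ j ω n - μhat j n) := by funext ω; ring
    rw [← hcovθ j n n', e, hcovθ j n' n]
  have hintK : ∀ n n', Integrable (fun ω => ∑ i, G i n ω * (starRingEnd ℂ) (G i n' ω)) :=
    fun n n' => integrable_finset_sum _ fun i _ => hGGint i n n'
  have hKI : ∀ n n', (∫ ω, ∑ i, G i n ω * (starRingEnd ℂ) (G i n' ω)) = Hm n' n := by
    intro n n'
    rw [integral_finset_sum _ fun i _ => hGGint i n n']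
    simp only [hGGI]
    rw [hHm]
    simp only [Matrix.add_apply, Matrix.mul_apply, Matrix.conjTranspose_apply,
      Matrix.sum_apply, Matrix.hadamard_apply, Matrix.map_apply, Finset.sum_add_distrib]
    congr 1
    · exact Finset.sum_congr rfl fun i _ => by rw [RCLike.star_def]; ring
    · rw [Finset.sum_comm]
      refine Finset.sum_congr rfl fun j _ => ?_
      rw [Finset.sum_mul, hSigSym j n' n]
      exact Finset.sum_congr rfl fun i _ => by rw [RCLike.star_def]; ring
  have hintQ : ∀ n n', Integrable (fun ω =>
      (∑ i, G i n ω * (starRingEnd ℂ) (G i n' ω)) * (x ω n * (starRingEnd ℂ) (x ω n'))) :=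
    fun n n' => (hindKP n n').integrable_mul (hintK n n') (hintx2 n n')
  have hQI : ∀ n n', (∫ ω, (∑ i, G i n ω * (starRingEnd ℂ) (G i n' ω))
      * (x ω n * (starRingEnd ℂ) (x ω n')))
      = Hm n' n * (Sigx n n' + μx n * (starRingEnd ℂ) (μx n')) := by
    intro n n'
    rw [aux_integral_mul_c (hindKP n n') (hintK n n') (hintx2 n n'), hKI, hPI]
  -- pointwise expansion of the residual
  have hres : ∀ ω i, (y - Fbar ω *ᵥ x ω) i = y i - ∑ n, G i n ω * x ω n := by
    intro ω i
    simp only [Pi.sub_apply, hFbar ω, Matrix.mulVec, dotProduct, Matrix.add_apply,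
      Matrix.sum_apply, Matrix.mul_diagonal, hGdef, hcdef]
  have hQpt : ∀ ω, (∑ i, (∑ n, G i n ω * x ω n) * (starRingEnd ℂ) (∑ n, G i n ω * x ω n))
      = ∑ n, ∑ n', (∑ i, G i n ω * (starRingEnd ℂ) (G i n' ω))
        * (x ω n * (starRingEnd ℂ) (x ω n')) := by
    intro ω
    have e1 : ∀ i, (starRingEnd ℂ) (∑ n, G i n ω * x ω n)
        = ∑ n', (starRingEnd ℂ) (G i n' ω) * (starRingEnd ℂ) (x ω n') := by
      intro i
      simp only [map_sum, _root_.map_mul]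
    calc ∑ i, (∑ n, G i n ω * x ω n) * (starRingEnd ℂ) (∑ n, G i n ω * x ω n)
        = ∑ i, ∑ n, ∑ n', (G i n ω * (starRingEnd ℂ) (G i n' ω))
            * (x ω n * (starRingEnd ℂ) (x ω n')) := by
          refine Finset.sum_congr rfl fun i _ => ?_
          rw [e1 i, Finset.sum_mul_sum]
          exact Finset.sum_congr rfl fun n _ => Finset.sum_congr rfl fun n' _ => by ring
      _ = ∑ n, ∑ n', (∑ i, G i n ω * (starRingEnd ℂ) (G i n' ω))
            * (x ω n * (starRingEnd ℂ) (x ω n')) := by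
          rw [Finset.sum_comm]
          refine Finset.sum_congr rfl fun n _ => ?_
          rw [Finset.sum_comm]
          refine Finset.sum_congr rfl fun n' _ => ?_
          rw [Finset.sum_mul]
  have hpt : ∀ ω, ((∑ i, ‖(y - Fbar ω *ᵥ x ω) i‖ ^ 2 : ℝ) : ℂ)
      = (∑ i, y i * (starRingEnd ℂ) (y i)) - ((2 * (L ω).re : ℝ) : ℂ)
        + ∑ n, ∑ n', (∑ i, G i n ω * (starRingEnd ℂ) (G i n' ω))
          * (x ω n * (starRingEnd ℂ) (x ω n')) := by
    intro ω
    have h1 : ((∑ i, ‖(y - Fbar ω *ᵥ x ω) i‖ ^ 2 : ℝ) : ℂ)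
        = ∑ i, (y i - ∑ n, G i n ω * x ω n)
          * (starRingEnd ℂ) (y i - ∑ n, G i n ω * x ω n) := by
      push_cast
      refine Finset.sum_congr rfl fun i _ => ?_
      rw [hres ω i]
      exact (RCLike.mul_conj _).symm
    have h2 : ∀ i : Fin M, (y i - ∑ n, G i n ω * x ω n)
        * (starRingEnd ℂ) (y i - ∑ n, G i n ω * x ω n)
        = y i * (starRingEnd ℂ) (y i)
          - ((starRingEnd ℂ) (y i) * ∑ n, G i n ω * x ω n
            + (starRingEnd ℂ) ((starRingEnd ℂ) (y i) * ∑ n, G i n ω * x ω n))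
          + (∑ n, G i n ω * x ω n) * (starRingEnd ℂ) (∑ n, G i n ω * x ω n) := by
      intro i
      rw [map_sub, _root_.map_mul, Complex.conj_conj]
      ring
    rw [h1]
    calc ∑ i, (y i - ∑ n, G i n ω * x ω n)
          * (starRingEnd ℂ) (y i - ∑ n, G i n ω * x ω n)
        = (∑ i, y i * (starRingEnd ℂ) (y i)) - (L ω + (starRingEnd ℂ) (L ω))
          + ∑ i, (∑ n, G i n ω * x ω n) * (starRingEnd ℂ) (∑ n, G i n ω * x ω n) := by
          have hconjL : (starRingEnd ℂ) (L ω)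
              = ∑ i, (starRingEnd ℂ) ((starRingEnd ℂ) (y i) * ∑ n, G i n ω * x ω n) := by
            simp only [hLdef]; exact map_sum (starRingEnd ℂ) _ _
          rw [hconjL]
          simp only [hLdef]
          rw [← Finset.sum_add_distrib, ← Finset.sum_sub_distrib, ← Finset.sum_add_distrib]
          exact Finset.sum_congr rfl fun i _ => h2 i
      _ = (∑ i, y i * (starRingEnd ℂ) (y i)) - ((2 * (L ω).re : ℝ) : ℂ)
          + ∑ n, ∑ n', (∑ i, G i n ω * (starRingEnd ℂ) (G i n' ω))
            * (x ω n * (starRingEnd ℂ) (x ω n')) := by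
          rw [Complex.add_conj, hQpt ω]
  -- integrate
  rw [← intOfReal]
  simp only [hpt]
  have iB : Integrable (fun ω => ((2 * (L ω).re : ℝ) : ℂ)) volume := by
    exact ((hintL.re).const_mul 2).ofReal
  have iAB : Integrable (fun ω => (∑ i, y i * (starRingEnd ℂ) (y i))
      - ((2 * (L ω).re : ℝ) : ℂ)) volume := by
    exact (integrable_const _).sub iB
  rw [integral_add iAB
      (integrable_finset_sum _ fun n _ => integrable_finset_sum _ fun n' _ => hintQ n n'),
    integral_sub (integrable_const _) iB, integral_const,
    integral_finset_sum _ fun n _ => integrable_finset_sum _ fun n' _ => hintQ n n']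
  have hmid : (∫ ω, ((2 * (L ω).re : ℝ) : ℂ))
      = ((2 * ((∑ i, (starRingEnd ℂ) (y i) * ∑ n, F₀ i n * μx n).re) : ℝ) : ℂ) := by
    rw [intOfReal, integral_const_mul]
    have := integral_re hintL (𝕜 := ℂ)
    simp only [RCLike.re_to_complex] at this
    rw [this, hLI]
  rw [hmid]
  have hQsum : ∀ n : Fin N, (∫ ω, ∑ n', (∑ i, G i n ω * (starRingEnd ℂ) (G i n' ω))
      * (x ω n * (starRingEnd ℂ) (x ω n')))
      = ∑ n', Hm n' n * (Sigx n n' + μx n * (starRingEnd ℂ) (μx n')) := by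
    intro n
    rw [integral_finset_sum _ fun n' _ => hintQ n n']
    exact Finset.sum_congr rfl fun n' _ => hQI n n'
  simp only [hQsum]
  -- final algebra
  have hw : star μx ⬝ᵥ (F₀ᴴ *ᵥ y)
      = (starRingEnd ℂ) (∑ i, (starRingEnd ℂ) (y i) * ∑ n, F₀ i n * μx n) := by
    simp only [dotProduct, Matrix.mulVec, Pi.star_apply, Matrix.conjTranspose_apply,
      map_sum, _root_.map_mul, Complex.conj_conj, RCLike.star_def, Finset.mul_sum]
    rw [Finset.sum_comm]
    exact Finset.sum_congr rfl fun n _ => Finset.sum_congr rfl fun i _ => by ring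
  have htr : Matrix.trace (Hm * Sigx) = ∑ n, ∑ n', Hm n' n * Sigx n n' := by
    simp only [Matrix.trace, Matrix.diag, Matrix.mul_apply]
    rw [Finset.sum_comm]
  have hquad : star μx ⬝ᵥ (Hm *ᵥ μx)
      = ∑ n, ∑ n', Hm n' n * (μx n * (starRingEnd ℂ) (μx n')) := by
    simp only [dotProduct, Matrix.mulVec, Pi.star_apply, RCLike.star_def,
      Finset.mul_sum]
    rw [Finset.sum_comm]
    exact Finset.sum_congr rfl fun n _ => Finset.sum_congr rfl fun n' _ => by ring
  have hC0 : (∑ i, y i * (starRingEnd ℂ) (y i)) = ((∑ i, ‖y i‖ ^ 2 : ℝ) : ℂ) := by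
    push_cast
    exact Finset.sum_congr rfl fun i _ => RCLike.mul_conj _
  have hrecast : ((2 * ((∑ i, (starRingEnd ℂ) (y i) * ∑ n, F₀ i n * μx n).re) : ℝ) : ℂ)
      = 2 * (((star μx ⬝ᵥ (F₀ᴴ *ᵥ y)).re : ℝ) : ℂ) := by
    rw [hw, Complex.conj_re]
    push_cast
    ring
  rw [htr, hquad, hC0, hrecast]
  simp only [measure_univ, ENNReal.toReal_one, probReal_univ, one_smul]
  have hsplit : (∑ n, ∑ n', Hm n' n * (Sigx n n' + μx n * (starRingEnd ℂ) (μx n')))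
      = (∑ n, ∑ n', Hm n' n * (μx n * (starRingEnd ℂ) (μx n')))
        + ∑ n, ∑ n', Hm n' n * Sigx n n' := by
    rw [← Finset.sum_add_distrib]
    refine Finset.sum_congr rfl fun n _ => ?_
    rw [← Finset.sum_add_distrib]
    exact Finset.sum_congr rfl fun n' _ => by ring
  rw [hsplit]
  ring
end
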